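/- Let $A_1, \ldots, A_m$ be nonempty finite sets of nonzero reals with $\max A_{k+1} \le \frac14 d(A_k)$ for $1 \le k < m$. Then the sumset $A_1 + A_2 + \cdots + A_m$ has cardinality exactly $\prod_{k=1}^m \#A_k$ (i.e., all sums $x_1 + \cdots + x_m$ with $x_i \in A_i$ are distinct). -/
import Mathlib


/-- Minimal gap of a finite set: min distance between distinct points if `2 ≤ card`,
and `|x|` for a singleton `{x}`. -/
noncomputable def dGap (A : Finset ℝ) : ℝ :=
  if 2 ≤ A.card then sInf {r : ℝ | ∃ x ∈ A, ∃ y ∈ A, x ≠ y ∧ r = |x - y|}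
  else sInf {r : ℝ | ∃ x ∈ A, r = |x|}

/-- `max A = max_{a ∈ A} |a|`. -/
noncomputable def maxAbs (A : Finset ℝ) : ℝ := sSup {r : ℝ | ∃ x ∈ A, r = |x|}

lemma maxAbs_set_eq (A : Finset ℝ) :
    {r : ℝ | ∃ x ∈ A, r = |x|} = ↑(A.image fun x => |x|) := by
  ext r; simp [eq_comm]

lemma le_maxAbs {A : Finset ℝ} {x : ℝ} (hx : x ∈ A) : |x| ≤ maxAbs A := by
  have hb : BddAbove {r : ℝ | ∃ x ∈ A, r = |x|} := by
    rw [maxAbs_set_eq]; exact (A.image fun x => |x|).bddAbove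
  exact le_csSup hb ⟨x, hx, rfl⟩

lemma maxAbs_pos {A : Finset ℝ} (hA : A.Nonempty) (h0 : ∀ a ∈ A, a ≠ 0) :
    0 < maxAbs A := by
  obtain ⟨x, hx⟩ := hA
  exact lt_of_lt_of_le (abs_pos.mpr (h0 x hx)) (le_maxAbs hx)

lemma dGap_le {A : Finset ℝ} {x y : ℝ} (hx : x ∈ A) (hy : y ∈ A) (hxy : x ≠ y) :
    dGap A ≤ |x - y| := by
  have h2 : 2 ≤ A.card := Finset.one_lt_card.mpr ⟨x, hx, y, hy, hxy⟩
  rw [dGap, if_pos h2]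
  refine csInf_le ⟨0, ?_⟩ ⟨x, hx, y, hy, hxy, rfl⟩
  rintro r ⟨a, _, b, _, _, rfl⟩; exact abs_nonneg _

lemma dGap_le_two_maxAbs {A : Finset ℝ} (hA : A.Nonempty) :
    dGap A ≤ 2 * maxAbs A := by
  by_cases h2 : 2 ≤ A.card
  · obtain ⟨x, hx, y, hy, hxy⟩ := Finset.one_lt_card.mp h2
    calc dGap A ≤ |x - y| := dGap_le hx hy hxy
    _ ≤ |x| + |y| := abs_sub _ _
    _ ≤ maxAbs A + maxAbs A := add_le_add (le_maxAbs hx) (le_maxAbs hy)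
    _ = 2 * maxAbs A := by ring
  · obtain ⟨x, hx⟩ := hA
    rw [dGap, if_neg h2]
    have h1 : sInf {r : ℝ | ∃ x ∈ A, r = |x|} ≤ |x| := by
      refine csInf_le ⟨0, ?_⟩ ⟨x, hx, rfl⟩
      rintro r ⟨a, _, rfl⟩; exact abs_nonneg _
    have h3 := le_maxAbs hx
    have h4 : (0:ℝ) ≤ maxAbs A := le_trans (abs_nonneg x) h3
    linarith

lemma sum_lt_geom : ∀ (m : ℕ) (hm : 0 < m) (C : Fin m → ℝ),
    (∀ i, 0 < C i) →
    (∀ i : Fin m, ∀ h : (i : ℕ) + 1 < m, C ⟨(i : ℕ) + 1, h⟩ ≤ C i / 2) →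
    ∑ i, C i < 2 * C ⟨0, hm⟩ := by
  intro m
  induction m with
  | zero => intro hm; omega
  | succ n ih =>
    intro _ C hpos hh
    rw [Fin.sum_univ_succ]
    rcases Nat.eq_zero_or_pos n with h0 | hn
    · subst h0
      simp only [Finset.univ_eq_empty, Finset.sum_empty, add_zero]
      have := hpos 0
      have h0e : (0 : Fin 1) = ⟨0, Nat.one_pos⟩ := rfl
      rw [h0e] at this ⊢
      linarith
    · have htail : ∑ i : Fin n, C i.succ < 2 * C (Fin.succ ⟨0, hn⟩) := by
        refine ih hn (fun i => C i.succ) (fun i => hpos _) ?_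
        intro i h
        exact hh ⟨(i : ℕ) + 1, by omega⟩ (by simp; omega)
      have hhalf : C (Fin.succ ⟨0, hn⟩) ≤ C ⟨0, Nat.succ_pos n⟩ / 2 :=
        hh ⟨0, Nat.succ_pos n⟩ (by simp; omega)
      have h0e : (0 : Fin (n+1)) = ⟨0, Nat.succ_pos n⟩ := rfl
      rw [h0e]
      linarith

lemma sum_inj : ∀ (m : ℕ) (A : Fin m → Finset ℝ),
    (∀ k, (A k).Nonempty) →
    (∀ k, ∀ a ∈ A k, a ≠ 0) →
    (∀ k : Fin m, ∀ h : (k : ℕ) + 1 < m,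
      maxAbs (A ⟨(k : ℕ) + 1, h⟩) ≤ dGap (A k) / 4) →
    ∀ f g : Fin m → ℝ, (∀ i, f i ∈ A i) → (∀ i, g i ∈ A i) →
      ∑ i, f i = ∑ i, g i → f = g := by
  intro m
  induction m with
  | zero =>
    intro A _ _ _ f g _ _ _
    funext i; exact i.elim0
  | succ n ih =>
    intro A hne h0 hmax f g hf hg hsum
    rw [Fin.sum_univ_succ, Fin.sum_univ_succ] at hsum
    have key : f 0 = g 0 := by
      by_contra hne0
      have hd : dGap (A 0) ≤ |f 0 - g 0| := dGap_le (hf 0) (hg 0) hne0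
      rcases Nat.eq_zero_or_pos n with h0n | hn
      · subst h0n
        simp only [Finset.univ_eq_empty, Finset.sum_empty, add_zero] at hsum
        exact hne0 hsum
      · set C : Fin n → ℝ := fun i => maxAbs (A i.succ) with hC
        have hpos : ∀ i, 0 < C i := fun i => maxAbs_pos (hne _) (h0 _)
        have hhalf : ∀ i : Fin n, ∀ h : (i : ℕ) + 1 < n, C ⟨(i : ℕ) + 1, h⟩ ≤ C i / 2 := by
          intro i h
          have h1 : maxAbs (A ⟨(i : ℕ) + 2, by omega⟩) ≤ dGap (A ⟨(i : ℕ) + 1, by omega⟩) / 4 :=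
            hmax ⟨(i : ℕ) + 1, by omega⟩ (by simp; omega)
          have h2 : dGap (A ⟨(i : ℕ) + 1, by omega⟩) ≤ 2 * maxAbs (A ⟨(i : ℕ) + 1, by omega⟩) :=
            dGap_le_two_maxAbs (hne _)
          have e1 : (⟨(i : ℕ) + 1, h⟩ : Fin n).succ = ⟨(i : ℕ) + 2, by omega⟩ := rfl
          have e2 : (i : Fin n).succ = ⟨(i : ℕ) + 1, by omega⟩ := rfl
          simp only [hC, e1, e2]
          linarith
        have htail := sum_lt_geom n hn C hpos hhalf
        have hbound : |∑ i : Fin n, f i.succ - ∑ i : Fin n, g i.succ| ≤ ∑ i : Fin n, 2 * C i := by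
          rw [← Finset.sum_sub_distrib]
          calc |∑ i : Fin n, (f i.succ - g i.succ)| ≤ ∑ i : Fin n, |f i.succ - g i.succ| :=
                Finset.abs_sum_le_sum_abs _ _
          _ ≤ ∑ i : Fin n, 2 * C i := by
                refine Finset.sum_le_sum fun i _ => ?_
                have h1 := le_maxAbs (hf i.succ)
                have h2 := le_maxAbs (hg i.succ)
                have := abs_sub (f i.succ) (g i.succ)
                simp only [hC]; linarith
        rw [← Finset.mul_sum] at hbound
        have hbound2 : |∑ i : Fin n, f i.succ - ∑ i : Fin n, g i.succ| < 4 * C ⟨0, hn⟩ := by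
          linarith
        have hC0 : C ⟨0, hn⟩ ≤ dGap (A 0) / 4 := by
          have := hmax ⟨0, Nat.succ_pos n⟩ (by simp; omega)
          have e1 : (⟨0, hn⟩ : Fin n).succ = (⟨1, by omega⟩ : Fin (n+1)) := rfl
          have e2 : (0 : Fin (n+1)) = ⟨0, Nat.succ_pos n⟩ := rfl
          simp only [hC, e1, e2]
          exact this
        have heq : f 0 - g 0 = ∑ i : Fin n, g i.succ - ∑ i : Fin n, f i.succ := by linarith
        have : |f 0 - g 0| = |∑ i : Fin n, f i.succ - ∑ i : Fin n, g i.succ| := by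
          rw [heq, abs_sub_comm]
        linarith
    have hsum' : ∑ i : Fin n, f i.succ = ∑ i : Fin n, g i.succ := by
      rw [key] at hsum; linarith
    have htails := ih (fun i => A i.succ) (fun k => hne _) (fun k => h0 _)
      (fun k h => hmax ⟨(k : ℕ) + 1, by omega⟩ (by simp; omega))
      (fun i => f i.succ) (fun i => g i.succ) (fun i => hf _) (fun i => hg _) hsum'
    funext i
    refine Fin.cases key (fun j => ?_) i
    exact congrFun htails j

theorem stmt2 (m : ℕ) (A : Fin m → Finset ℝ)
    (hne : ∀ k, (A k).Nonempty)
    (h0 : ∀ k, ∀ a ∈ A k, a ≠ 0)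
    (hmax : ∀ k : Fin m, ∀ h : (k : ℕ) + 1 < m,
      maxAbs (A ⟨(k : ℕ) + 1, h⟩) ≤ dGap (A k) / 4) :
    ((Fintype.piFinset A).image fun f => ∑ i, f i).card = ∏ i, (A i).card := by
  rw [Finset.card_image_of_injOn, Fintype.card_piFinset]
  intro f hf g hg hsum
  simp only [Finset.mem_coe, Fintype.mem_piFinset] at hf hg
  exact sum_inj m A hne h0 hmax f g hf hg hsum
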